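/- Let (M,T) be an ordered metric space, let A, B ⊆ M be disjoint with M = A ⊔ B and x₁ <_T x₂ for all x₁ ∈ A, x₂ ∈ B. Suppose Snake(M,T) < ∞. Define a relation <_{T'} on ∂A by: x₀ <_{T'} y₀ if for every ε > 0 there exist a point x ∈ B_ε(x₀) ∩ A and δ > 0 such that x <_T y for every y ∈ B_δ(y₀) ∩ A. Then <_{T'} is a strict total order on ∂A: for any distinct x₀, y₀ ∈ ∂A exactly one of x₀ <_{T'} y₀ and y₀ <_{T'} x₀ holds, and <_{T'} is transitive (there are no cycles x₀ <_{T'} x₁ <_{T'} ⋯ <_{T'} x_m = x₁ with m > 1). -/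
import Mathlib


open Metric Set

/-- The pair `(U₁, U₂)` contains a snake of length `s` with respect to the
strict total order `T`: a `T`-increasing sequence `a₀ <_T a₁ <_T ⋯ <_T a_s`
with even-indexed points in `U₁` and odd-indexed points in `U₂`. -/
def HasSnake {M : Type*} (T : M → M → Prop) (U₁ U₂ : Set M) (s : ℕ) : Prop :=
  ∃ a : Fin (s + 1) → M,
    (∀ i j : Fin (s + 1), i < j → T (a i) (a j)) ∧
    (∀ i : Fin (s + 1), Even (i : ℕ) → a i ∈ U₁) ∧
    (∀ i : Fin (s + 1), Odd (i : ℕ) → a i ∈ U₂)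

/-- The snake number `Snake_T(x, y)`: the greatest `s` such that for every `ε > 0`
the pair `(B_ε(x), B_ε(y))` contains a snake of length `s`; `∞` if no greatest exists. -/
noncomputable def snakeNum {M : Type*} [MetricSpace M] (T : M → M → Prop) (x y : M) : ℕ∞ :=
  ⨆ s ∈ {s : ℕ | ∀ ε : ℝ, 0 < ε → HasSnake T (ball x ε) (ball y ε) s}, (s : ℕ∞)

/-- The snake number `Snake(M, T)` of the ordered metric space: the supremum of
`Snake_T(x, y)` over all pairs of distinct points. -/
noncomputable def snakeNumSpace {M : Type*} [MetricSpace M] (T : M → M → Prop) : ℕ∞ :=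
  ⨆ (x : M) (y : M) (_ : x ≠ y), snakeNum T x y

/-- The Lebesgue covering dimension of `M` is at most `n`: every finite open cover
has a finite open refinement in which no point belongs to more than `n + 1` sets. -/
def CovDimLE (M : Type*) [TopologicalSpace M] (n : ℤ) : Prop :=
  ∀ 𝒰 : Set (Set M), 𝒰.Finite → (∀ U ∈ 𝒰, IsOpen U) → ⋃₀ 𝒰 = Set.univ →
    ∃ 𝒱 : Set (Set M), 𝒱.Finite ∧ (∀ V ∈ 𝒱, IsOpen V) ∧ ⋃₀ 𝒱 = Set.univ ∧
      (∀ V ∈ 𝒱, ∃ U ∈ 𝒰, V ⊆ U) ∧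
      ∀ x : M, ({V ∈ 𝒱 | x ∈ V}.ncard : ℤ) ≤ n + 1

/-- The order on the boundary `∂A` induced by `T`: `x₀ <_{T'} y₀` iff for every `ε > 0`
there are `x ∈ B_ε(x₀) ∩ A` and `δ > 0` with `x <_T y` for all `y ∈ B_δ(y₀) ∩ A`. -/
def boundaryOrder {M : Type*} [MetricSpace M] (T : M → M → Prop) (A : Set M) :
    M → M → Prop := fun x₀ y₀ =>
  ∀ ε : ℝ, 0 < ε → ∃ x ∈ Metric.ball x₀ ε ∩ A, ∃ δ : ℝ, 0 < δ ∧
    ∀ y ∈ Metric.ball y₀ δ ∩ A, T x y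

section SnakeAux

private lemma exists_chain {α : Type*} (Inv : ℕ → α → Prop) (R : α → α → Prop)
    (h0 : ∃ a, Inv 0 a) (hstep : ∀ n a, Inv n a → ∃ b, Inv (n + 1) b ∧ R a b) :
    ∃ c : ℕ → α, (∀ n, Inv n (c n)) ∧ ∀ n, R (c n) (c (n + 1)) := by
  obtain ⟨a0, ha0⟩ := h0
  choose F hF hR using hstep
  let c : (n : ℕ) → {a // Inv n a} :=
    fun n => Nat.rec ⟨a0, ha0⟩ (fun n p => ⟨F n p.1 p.2, hF n p.1 p.2⟩) n
  exact ⟨fun n => (c n).1, fun n => (c n).2, fun n => hR n (c n).1 (c n).2⟩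

private lemma hasSnake_mono {M : Type*} {T : M → M → Prop} {U₁ U₂ V₁ V₂ : Set M} {s : ℕ}
    (h1 : U₁ ⊆ V₁) (h2 : U₂ ⊆ V₂) (h : HasSnake T U₁ U₂ s) : HasSnake T V₁ V₂ s := by
  obtain ⟨a, ha, he, ho⟩ := h
  exact ⟨a, ha, fun i hi => h1 (he i hi), fun i hi => h2 (ho i hi)⟩

private lemma hasSnake_of_ascending {M : Type*} {T : M → M → Prop}
    (htrans : ∀ a b c, T a b → T b c → T a c) {U₁ U₂ : Set M} (c : ℕ → M)
    (hstep : ∀ n, T (c n) (c (n + 1)))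
    (h1 : ∀ n, Even n → c n ∈ U₁) (h2 : ∀ n, Odd n → c n ∈ U₂) (s : ℕ) :
    HasSnake T U₁ U₂ s := by
  have hmono : ∀ m n : ℕ, m < n → T (c m) (c n) := by
    intro m n h
    induction n with
    | zero => omega
    | succ n ih =>
      rcases Nat.lt_succ_iff_lt_or_eq.mp h with h' | h'
      · exact htrans _ _ _ (ih h') (hstep n)
      · subst h'; exact hstep m
  exact ⟨fun i => c i, fun i j hij => hmono i j hij,
    fun i hi => h1 i hi, fun i hi => h2 i hi⟩

private lemma hasSnake_of_descending {M : Type*} {T : M → M → Prop}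
    (htrans : ∀ a b c, T a b → T b c → T a c) {U₁ U₂ : Set M} (c : ℕ → M)
    (hstep : ∀ n, T (c (n + 1)) (c n))
    (h1 : ∀ n, Even n → c n ∈ U₁) (h2 : ∀ n, Odd n → c n ∈ U₂) (s : ℕ) :
    HasSnake T U₁ U₂ s := by
  have hmono : ∀ m n : ℕ, m < n → T (c n) (c m) := by
    intro m n h
    induction n with
    | zero => omega
    | succ n ih =>
      rcases Nat.lt_succ_iff_lt_or_eq.mp h with h' | h'
      · exact htrans _ _ _ (hstep n) (ih h')
      · subst h'; exact hstep m
  refine ⟨fun i => c (2 * s - (i : ℕ)), fun i j hij => ?_, fun i hi => ?_, fun i hi => ?_⟩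
  · have hj : (j : ℕ) ≤ s := Nat.lt_succ_iff.mp j.isLt
    exact hmono _ _ (by omega)
  · apply h1
    have hi' : (i : ℕ) ≤ s := Nat.lt_succ_iff.mp i.isLt
    rw [Nat.even_iff] at hi ⊢; omega
  · apply h2
    have hi' : (i : ℕ) ≤ s := Nat.lt_succ_iff.mp i.isLt
    rw [Nat.odd_iff] at hi ⊢; omega

private lemma snake_all_false {M : Type*} [MetricSpace M] {T : M → M → Prop} {x₀ y₀ : M}
    (hne : x₀ ≠ y₀) (hfin : snakeNumSpace T < ⊤)
    (hall : ∀ s : ℕ, ∀ ε : ℝ, 0 < ε → HasSnake T (ball x₀ ε) (ball y₀ ε) s) : False := by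
  have h1 : ∀ s : ℕ, (s : ℕ∞) ≤ snakeNum T x₀ y₀ := by
    intro s
    unfold snakeNum
    exact le_biSup (fun s : ℕ => (s : ℕ∞)) (hall s)
  have h2 : snakeNum T x₀ y₀ ≤ snakeNumSpace T := by
    unfold snakeNumSpace
    exact le_iSup_of_le x₀ (le_iSup_of_le y₀ (le_iSup_of_le hne le_rfl))
  obtain ⟨n, hn⟩ := WithTop.ne_top_iff_exists.mp hfin.ne
  have hle : ((n + 1 : ℕ) : ℕ∞) ≤ (n : ℕ∞) := (h1 (n + 1)).trans (h2.trans hn.symm.le)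
  have := Nat.cast_le.mp hle
  omega

end SnakeAux

/-- If `(M, T)` is an ordered metric space with `Snake(M,T) < ∞` and `M = A ⊔ B` with
every point of `A` being `T`-smaller than every point of `B`, then the induced relation
`<_{T'}` is a strict total order on `∂A`: for distinct points exactly one of
`x₀ <_{T'} y₀`, `y₀ <_{T'} x₀` holds, and the relation is transitive. -/
theorem boundaryOrder_isStrictTotalOrder
    {M : Type*} [MetricSpace M]
    (T : M → M → Prop) (hT : IsStrictTotalOrder M T)
    (A B : Set M) (hdisj : Disjoint A B) (hunion : A ∪ B = Set.univ)
    (hord : ∀ x₁ ∈ A, ∀ x₂ ∈ B, T x₁ x₂)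
    (hfin : snakeNumSpace T < ⊤) :
    (∀ x₀ ∈ frontier A, ∀ y₀ ∈ frontier A, x₀ ≠ y₀ →
      Xor' (boundaryOrder T A x₀ y₀) (boundaryOrder T A y₀ x₀)) ∧
    (∀ x₀ ∈ frontier A, ∀ y₀ ∈ frontier A, ∀ z₀ ∈ frontier A,
      boundaryOrder T A x₀ y₀ → boundaryOrder T A y₀ z₀ → boundaryOrder T A x₀ z₀) := by
  haveI := hT
  have htrans : ∀ a b c : M, T a b → T b c → T a c := fun a b c hab hbc => trans_of T hab hbc
  constructor
  · intro x₀ hx₀ y₀ hy₀ hne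
    by_cases hxy : boundaryOrder T A x₀ y₀ <;> by_cases hyx : boundaryOrder T A y₀ x₀
    · -- both hold: build an ascending infinite snake, contradiction
      exfalso
      apply snake_all_false hne hfin
      intro s ε hε
      set Inv : ℕ → M × ℝ → Prop := fun n p =>
        0 < p.2 ∧ p.1 ∈ A ∧
          (Even n → p.1 ∈ ball x₀ ε ∧ ∀ y ∈ ball y₀ p.2 ∩ A, T p.1 y) ∧
          (¬ Even n → p.1 ∈ ball y₀ ε ∧ ∀ y ∈ ball x₀ p.2 ∩ A, T p.1 y) with hInvdef
      obtain ⟨c, hc, hlink⟩ := exists_chain Inv (fun p q => T p.1 q.1)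
        (by
          obtain ⟨x, ⟨hxb, hxA⟩, δ, hδ, hbd⟩ := hxy ε hε
          exact ⟨(x, δ), hδ, hxA, fun _ => ⟨hxb, hbd⟩, fun h => absurd Even.zero h⟩)
        (by
          intro n p hp
          by_cases hn : Even n
          · obtain ⟨q, ⟨hqb, hqA⟩, δ', hδ', hbd'⟩ := hyx (min p.2 ε) (lt_min hp.1 hε)
            refine ⟨(q, δ'), ⟨hδ', hqA, fun h => absurd hn ?_, fun _ => ⟨?_, hbd'⟩⟩, ?_⟩
            · rw [Nat.even_add_one] at h; exact h
            · exact (ball_subset_ball (min_le_right _ _)) hqb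
            · exact ((hp.2.2.1 hn).2) q ⟨(ball_subset_ball (min_le_left _ _)) hqb, hqA⟩
          · obtain ⟨q, ⟨hqb, hqA⟩, δ', hδ', hbd'⟩ := hxy (min p.2 ε) (lt_min hp.1 hε)
            refine ⟨(q, δ'), ⟨hδ', hqA, fun _ => ⟨?_, hbd'⟩, fun h => absurd ?_ h⟩, ?_⟩
            · exact (ball_subset_ball (min_le_right _ _)) hqb
            · rw [Nat.even_add_one]; exact hn
            · exact ((hp.2.2.2 hn).2) q ⟨(ball_subset_ball (min_le_left _ _)) hqb, hqA⟩)
      exact hasSnake_of_ascending htrans (fun n => (c n).1) hlink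
        (fun n hn => ((hc n).2.2.1 hn).1)
        (fun n hn => ((hc n).2.2.2 (by rw [Nat.even_iff]; rw [Nat.odd_iff] at hn; omega)).1) s
    · exact Or.inl ⟨hxy, hyx⟩
    · exact Or.inr ⟨hyx, hxy⟩
    · -- neither holds: build a descending infinite snake, contradiction
      exfalso
      apply snake_all_false hne hfin
      intro s ε hε
      unfold boundaryOrder at hxy hyx
      push_neg at hxy hyx
      obtain ⟨ε₁, hε₁, H1⟩ := hxy
      obtain ⟨ε₂, hε₂, H2⟩ := hyx
      set ε' : ℝ := min (min ε ε₁) (min ε₂ (dist x₀ y₀ / 2)) with hε'def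
      have hd : 0 < dist x₀ y₀ := dist_pos.mpr hne
      have hε'pos : 0 < ε' := lt_min (lt_min hε hε₁) (lt_min hε₂ (by linarith))
      have hε'ε : ε' ≤ ε := (min_le_left _ _).trans (min_le_left _ _)
      have hε'1 : ε' ≤ ε₁ := (min_le_left _ _).trans (min_le_right _ _)
      have hε'2 : ε' ≤ ε₂ := (min_le_right _ _).trans (min_le_left _ _)
      have hε'd : ε' ≤ dist x₀ y₀ / 2 := (min_le_right _ _).trans (min_le_right _ _)
      have hdisj' : ∀ z : M, z ∈ ball x₀ ε' → z ∈ ball y₀ ε' → False := by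
        intro z h1 h2
        rw [mem_ball] at h1 h2
        have ht := dist_triangle x₀ z y₀
        rw [dist_comm x₀ z] at ht
        linarith
      set Inv : ℕ → M → Prop := fun n p =>
        p ∈ A ∧ (Even n → p ∈ ball x₀ ε') ∧ (¬ Even n → p ∈ ball y₀ ε') with hInvdef
      obtain ⟨c, hc, hlink⟩ := exists_chain Inv (fun p q => T q p)
        (by
          obtain ⟨p, hpA, hpd⟩ :=
            Metric.mem_closure_iff.mp (frontier_subset_closure hx₀) ε' hε'pos
          exact ⟨p, hpA, fun _ => mem_ball.mpr (by rw [dist_comm]; exact hpd),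
            fun h => absurd Even.zero h⟩)
        (by
          intro n p hp
          by_cases hn : Even n
          · obtain ⟨q, ⟨hqb, hqA⟩, hnT⟩ :=
              H1 p ⟨(ball_subset_ball hε'1) (hp.2.1 hn), hp.1⟩ ε' hε'pos
            have hpq : p ≠ q := fun h => hdisj' p (hp.2.1 hn) (h ▸ hqb)
            have hTqp : T q p := by
              rcases trichotomous_of T p q with h | h | h
              · exact absurd h hnT
              · exact absurd h hpq
              · exact h
            refine ⟨q, ⟨hqA, fun h => absurd hn ?_, fun _ => hqb⟩, hTqp⟩
            rw [Nat.even_add_one] at h; exact h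
          · obtain ⟨q, ⟨hqb, hqA⟩, hnT⟩ :=
              H2 p ⟨(ball_subset_ball hε'2) (hp.2.2 hn), hp.1⟩ ε' hε'pos
            have hpq : p ≠ q := fun h => hdisj' q hqb (h ▸ (hp.2.2 hn))
            have hTqp : T q p := by
              rcases trichotomous_of T p q with h | h | h
              · exact absurd h hnT
              · exact absurd h hpq
              · exact h
            refine ⟨q, ⟨hqA, fun _ => hqb, fun h => absurd ?_ h⟩, hTqp⟩
            rw [Nat.even_add_one]; exact hn)
      refine hasSnake_mono (ball_subset_ball hε'ε) (ball_subset_ball hε'ε) ?_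
      exact hasSnake_of_descending htrans c hlink
        (fun n hn => (hc n).2.1 hn)
        (fun n hn => (hc n).2.2 (by rw [Nat.even_iff]; rw [Nat.odd_iff] at hn; omega)) s
  · intro x₀ _ y₀ _ z₀ _ hxy hyz ε hε
    obtain ⟨x, hx, δ₁, hδ₁, hb₁⟩ := hxy ε hε
    obtain ⟨y, hy, δ₂, hδ₂, hb₂⟩ := hyz δ₁ hδ₁
    exact ⟨x, hx, δ₂, hδ₂, fun z hz => htrans _ _ _ (hb₁ y hy) (hb₂ z hz)⟩
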